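/- Let X₁, …, Xₙ be independent real-valued integrable random variables with finite variances on a probability space, let m > 0 satisfy m > |E[Xₖ]| for every k, and let Zₖ = max(min(Xₖ, m), −m) be the truncation of Xₖ to [−m, m]. Let b ≥ 0 and let Y₁, …, Yₙ be real-valued random variables on the same space such that |Yₖ − Zₖ| ≤ b almost surely for every k. Then for every z > 0, P[|Σₖ Yₖ − Σₖ E[Xₖ]| ≥ z] ≤ 2 · exp( Σₖ Var[Xₖ] / (m(m − |E[Xₖ]|)) − (z − b·n)/m ). -/

import Mathlib

open MeasureTheory ProbabilityTheory Real


lemma exp_le_quad_neg {x : ℝ} (hx : x ≤ 0) : exp x ≤ 1 + x + x^2/2 := by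
  set y := -x with hy
  have hy0 : 0 ≤ y := by simp [hy]; linarith
  have h1 : 1 + y + y^2/2 ≤ exp y := Real.quadratic_le_exp_of_nonneg hy0
  have h2 : 0 < 1 + y + y^2/2 := by positivity
  have h3 : exp x = (exp y)⁻¹ := by rw [hy, Real.exp_neg, inv_inv]
  rw [h3]
  have h4 : (exp y)⁻¹ ≤ (1 + y + y^2/2)⁻¹ := inv_anti₀ h2 h1
  refine h4.trans ?_
  rw [inv_le_iff_one_le_mul₀ h2]
  have hxy : x = -y := by rw [hy]; ring
  have key : (1 + x + x^2/2) * (1 + y + y^2/2) = 1 + y^4/4 := by rw [hxy]; ring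
  nlinarith [sq_nonneg (y^2)]

lemma exp_mul_le_pade {x : ℝ} (hx : 0 ≤ x) : exp x * (2 - x) ≤ 2 + x := by
  set f : ℝ → ℝ := fun s => 2 + s - exp s * (2 - s) with hf
  have hderiv : ∀ t : ℝ, HasDerivAt f (1 - exp t * (1 - t)) t := by
    intro t
    have h1 : HasDerivAt (fun s : ℝ => 2 + s) 1 t := by
      simpa using (hasDerivAt_id t).const_add (2:ℝ)
    have h2 : HasDerivAt (fun s : ℝ => exp s * (2 - s)) (exp t * (2 - t) + exp t * (-1)) t :=
      (Real.hasDerivAt_exp t).mul ((hasDerivAt_id t).const_sub (2:ℝ))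
    have : HasDerivAt (fun s => 2 + s - exp s * (2 - s)) (1 - (exp t * (2 - t) + exp t * (-1))) t := h1.sub h2
    convert this using 1
    ring
  have hmono : MonotoneOn f (Set.Ici (0:ℝ)) := by
    apply monotoneOn_of_deriv_nonneg (convex_Ici 0)
    · exact (Continuous.continuousOn (by continuity))
    · intro t _
      exact (hderiv t).differentiableAt.differentiableWithinAt
    · intro t _
      rw [(hderiv t).deriv]
      have h5 : 1 - t ≤ exp (-t) := by
        have := Real.add_one_le_exp (-t); linarith
      have h6 : exp t * (1 - t) ≤ exp t * exp (-t) :=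
        mul_le_mul_of_nonneg_left h5 (exp_pos t).le
      rw [← Real.exp_add] at h6
      simp at h6
      linarith
  have h0 : f 0 ≤ f x := hmono (Set.mem_Ici.2 le_rfl) (Set.mem_Ici.2 hx) hx
  have : f 0 = 0 := by simp [hf]
  have := h0
  simp only [hf] at this ⊢
  rw [Real.exp_zero] at this
  linarith

lemma quadBound {w c : ℝ} (hc0 : 0 ≤ c) (hc : c < 2) (hw : w ≤ c) : exp w ≤ 1 + w + w^2/(2 - c) := by
  have h2c : 0 < 2 - c := by linarith
  rcases le_or_gt w 0 with h | h
  · have := exp_le_quad_neg h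
    have h4 : w^2/2 ≤ w^2/(2-c) := by
      gcongr
      linarith
    linarith
  · have h2w : 0 < 2 - w := by linarith
    have hp := exp_mul_le_pade h.le
    have h1 : exp w ≤ (2 + w)/(2 - w) := by
      rw [le_div_iff₀ h2w]; exact hp
    have h2 : (2 + w)/(2 - w) = 1 + w + w^2/(2 - w) := by
      field_simp
      ring
    have h3 : w^2/(2-w) ≤ w^2/(2-c) := by
      gcongr <;> linarith
    rw [h2] at h1
    linarith


lemma trunc_neg {x m : ℝ} (hm : 0 ≤ m) :
    max (min (-x) m) (-m) = -(max (min x m) (-m)) := by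
  simp only [min_def, max_def]
  split_ifs <;> linarith

lemma keyReal {m μ x : ℝ} (hm : 0 < m) (hμ : |μ| < m) :
    exp ((max (min x m) (-m) - μ)/m) ≤ 1 + (x - μ)/m + (x - μ)^2/(m*(m - |μ|)) := by
  have habs := abs_lt.1 hμ
  obtain ⟨hμ1, hμ2⟩ := habs
  have hs1 : -μ ≤ |μ| := neg_le_abs μ
  have hs2 : μ ≤ |μ| := le_abs_self μ
  have hd : 0 < m - |μ| := by linarith [abs_lt.1 hμ]
  have hp : 0 < m + μ := by linarith
  set z := max (min x m) (-m) with hzdef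
  have hz1 : -m ≤ z := le_max_right _ _
  have hz2 : z ≤ m := max_le (min_le_right _ _) (by linarith)
  -- step 1
  have step1 : exp ((z - μ)/m) ≤ 1 + (z - μ)/m + (z - μ)^2/(m*(m + μ)) := by
    have hc0 : 0 ≤ (m - μ)/m := div_nonneg (by linarith) hm.le
    have hc2 : (m - μ)/m < 2 := by
      rw [div_lt_iff₀ hm]; linarith
    have hwc : (z - μ)/m ≤ (m - μ)/m := by gcongr <;> linarith
    have hq := quadBound hc0 hc2 hwc
    have h1 : 2 - (m - μ)/m = (m+μ)/m := by
      field_simp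
      ring
    have e : ((z - μ)/m)^2/((m+μ)/m) = (z - μ)^2/(m*(m+μ)) := by
      rw [div_eq_div_iff (by positivity) (by positivity)]
      field_simp
    rw [h1] at hq
    rw [e] at hq
    exact hq
  -- step 2
  have step2 : 1 + (z - μ)/m + (z - μ)^2/(m*(m + μ)) ≤
      1 + (x - μ)/m + (x - μ)^2/(m*(m - |μ|)) := by
    rcases le_total x (-m) with hx | hx
    · have hz : z = -m := by
        rw [hzdef, min_eq_left (by linarith : x ≤ m), max_eq_right (by linarith : x ≤ -m)]
      rw [hz]
      have e1 : 1 + (-m - μ)/m + (-m - μ)^2/(m*(m + μ)) = 1 := by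
        field_simp
        ring
      rw [e1]
      have h2 : m - |μ| ≤ μ - x := by linarith
      have h3 : 0 ≤ (μ - x) * ((μ - x) - (m - |μ|)) :=
        mul_nonneg (by linarith) (by linarith)
      have h4 : 0 ≤ -((μ - x)/m) + (x - μ)^2/(m*(m - |μ|)) := by
        rw [le_neg_add_iff_le, div_le_div_iff₀ (by positivity) (by positivity)]
        nlinarith
      have h5 : (x - μ)/m = -((μ - x)/m) := by ring
      linarith
    · rcases le_total m x with hx' | hx'
      · have hz : z = m := by
          rw [hzdef, min_eq_right hx', max_eq_left (by linarith : -m ≤ m)]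
        rw [hz]
        have h1 : (m - μ)/m ≤ (x - μ)/m := by gcongr <;> linarith
        have h2 : (m - μ)^2/(m*(m + μ)) ≤ (x - μ)^2/(m*(m - |μ|)) := by
          apply div_le_div₀ (by positivity) _ (by positivity) _
          · nlinarith
          · nlinarith
        linarith
      · have hz : z = x := by
          rw [hzdef, min_eq_left hx', max_eq_left (by linarith : -m ≤ x)]
        rw [hz]
        have h2 : (x - μ)^2/(m*(m + μ)) ≤ (x - μ)^2/(m*(m - |μ|)) := by
          gcongr <;> nlinarith
        linarith
  linarith


lemma iIndepFun_ae_eq {Ω ι : Type*} [MeasurableSpace Ω] {μ : Measure Ω} {f g : ι → Ω → ℝ}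
    (hf : iIndepFun f μ) (h : ∀ i, f i =ᵐ[μ] g i) :
    iIndepFun g μ := by
  rw [iIndepFun_iff_measure_inter_preimage_eq_mul] at hf ⊢
  intro S sets hsets
  have hone : ∀ i, μ (g i ⁻¹' sets i) = μ (f i ⁻¹' sets i) := by
    intro i
    apply measure_congr
    apply Filter.eventuallyEq_set.2
    filter_upwards [h i] with ω hω
    simp [Set.mem_preimage, hω]
  have hint : μ (⋂ i ∈ S, g i ⁻¹' sets i) = μ (⋂ i ∈ S, f i ⁻¹' sets i) := by
    apply measure_congr
    apply Filter.eventuallyEq_set.2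
    have hAll : ∀ᵐ ω ∂μ, ∀ i ∈ S, f i ω = g i ω :=
      (Filter.eventually_all_finset S).2 fun i _ => h i
    filter_upwards [hAll] with ω hω
    simp only [Set.mem_iInter, Set.mem_preimage]
    constructor
    · intro hmem i hi; rw [hω i hi]; exact hmem i hi
    · intro hmem i hi; rw [← hω i hi]; exact hmem i hi
  rw [hint, hf S hsets]
  exact Finset.prod_congr rfl fun i _ => (hone i).symm

lemma integral_exp_trunc_le {Ω : Type*} [MeasureSpace Ω] [IsProbabilityMeasure (ℙ : Measure Ω)]
    (X : Ω → ℝ) (hXint : Integrable X) (hX2 : MemLp X 2 ℙ) {m : ℝ} (hm : 0 < m)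
    (hmE : |∫ ω, X ω| < m) {Z : Ω → ℝ} (hZmeas : AEStronglyMeasurable Z ℙ)
    (hZ : ∀ᵐ ω ∂ℙ, Z ω = max (min (X ω) m) (-m)) :
    ∫ ω, exp ((Z ω - ∫ ω', X ω') / m) ≤ exp (variance X ℙ / (m * (m - |∫ ω', X ω'|))) := by
  set μx := ∫ ω', X ω' with hμx
  set K := m * (m - |μx|) with hK
  have hKpos : 0 < K := by
    have : 0 < m - |μx| := by linarith
    positivity
  have hpt : ∀ᵐ ω ∂ℙ, exp ((Z ω - μx)/m) ≤ 1 + (X ω - μx)/m + (X ω - μx)^2/K := by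
    filter_upwards [hZ] with ω hω
    rw [hω]
    exact keyReal hm hmE
  have hsqint : Integrable (fun ω => (X ω - μx)^2) := by
    have := (hX2.sub (memLp_const μx)).integrable_sq
    simpa using this
  have hsub : Integrable (fun ω => X ω - μx) := by
    exact hXint.sub (integrable_const μx)
  have hA : Integrable (fun ω => (X ω - μx)/m) := hsub.div_const m
  have hB : Integrable (fun ω => (X ω - μx)^2/K) := hsqint.div_const K
  have hf1 : Integrable (fun ω => 1 + (X ω - μx)/m) := by
    simpa using (integrable_const (1:ℝ)).add hA
  have hRint : Integrable (fun ω => 1 + (X ω - μx)/m + (X ω - μx)^2/K) := hf1.add hB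
  have hLmeas : AEStronglyMeasurable (fun ω => exp ((Z ω - μx)/m)) ℙ := by
    apply Real.continuous_exp.comp_aestronglyMeasurable
    have h : AEStronglyMeasurable (fun ω => (Z ω - μx) * m⁻¹) ℙ :=
      (hZmeas.sub (aestronglyMeasurable_const (b := μx))).mul_const m⁻¹
    simpa [div_eq_mul_inv] using h
  have hLint : Integrable (fun ω => exp ((Z ω - μx)/m)) := by
    apply Integrable.mono' (integrable_const (exp ((m + |μx|)/m))) hLmeas
    filter_upwards [hZ] with ω hω
    rw [Real.norm_eq_abs, abs_of_pos (exp_pos _), Real.exp_le_exp]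
    have h1 : Z ω ≤ m := by rw [hω]; exact max_le (min_le_right _ _) (by linarith)
    have h2 : -μx ≤ |μx| := neg_le_abs μx
    gcongr
    linarith
  have hmono := integral_mono_ae hLint hRint hpt
  have hInt1 : ∫ ω, (X ω - μx) ∂ℙ = 0 := by
    rw [integral_sub hXint (integrable_const μx), integral_const]
    simp [hμx]
  have hVar : ∫ ω, (X ω - μx)^2 ∂ℙ = variance X ℙ := by
    rw [variance_eq_integral hX2.aestronglyMeasurable.aemeasurable]
  have hcalc : ∫ ω, (1 + (X ω - μx)/m + (X ω - μx)^2/K) ∂ℙ = 1 + variance X ℙ / K := by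
    rw [integral_add hf1 hB, integral_add (integrable_const 1) hA,
      integral_const, integral_div, integral_div, hInt1, hVar]
    simp
  rw [hcalc] at hmono
  have := Real.add_one_le_exp (variance X ℙ / K)
  linarith


/-- concentration for perturbed truncated sums. With `X k`, `Z k`, `m` as in
the truncation concentration bound, if `|Y k - Z k| ≤ b` almost surely for each `k`, then
for every `z > 0`,
`P[|Σ Y k - Σ E[X k]| ≥ z] ≤ 2 exp(Σ Var[X k]/(m(m - |E[X k]|)) - (z - b n)/m)`. -/
theorem truncation_concentration_perturbed {Ω : Type*} [MeasureSpace Ω]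
    [IsProbabilityMeasure (ℙ : Measure Ω)] (n : ℕ) (X : Fin n → Ω → ℝ)
    (hXind : iIndepFun X ℙ)
    (hXint : ∀ k, Integrable (X k)) (hX2 : ∀ k, MemLp (X k) 2 ℙ)
    (m : ℝ) (hm : 0 < m) (hmE : ∀ k, |∫ ω, X k ω| < m)
    (Z : Fin n → Ω → ℝ) (hZ : ∀ k ω, Z k ω = max (min (X k ω) m) (-m))
    (b : ℝ) (hb : 0 ≤ b) (Y : Fin n → Ω → ℝ)
    (hY : ∀ k, ∀ᵐ ω ∂ℙ, |Y k ω - Z k ω| ≤ b)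
    (z : ℝ) (hz : 0 < z) :
    ℙ {ω | z ≤ |(∑ k, Y k ω) - ∑ k, ∫ ω', X k ω'|} ≤
      ENNReal.ofReal
        (2 * exp ((∑ k, variance (X k) ℙ / (m * (m - |∫ ω, X k ω|))) - (z - b * n) / m)) := by
  classical
  set μk : Fin n → ℝ := fun k => ∫ ω, X k ω with hμk
  set Sμ : ℝ := ∑ k, μk k with hSμ
  set t : ℝ := z - b * n with ht
  set v : Fin n → ℝ := fun k => variance (X k) ℙ / (m * (m - |μk k|)) with hv
  -- measurable representatives
  have hXaem : ∀ k, AEMeasurable (X k) ℙ := fun k => (hXint k).aemeasurable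
  set X' : Fin n → Ω → ℝ := fun k => (hXaem k).mk (X k) with hX'
  have hX'meas : ∀ k, Measurable (X' k) := fun k => (hXaem k).measurable_mk
  have hX'ae : ∀ k, X k =ᵐ[ℙ] X' k := fun k => (hXaem k).ae_eq_mk
  have hX'ind : iIndepFun X' ℙ := iIndepFun_ae_eq hXind hX'ae
  set g : ℝ → ℝ := fun y => max (min y m) (-m) with hg
  have hgm : Measurable g := (measurable_id.min measurable_const).max measurable_const
  set Z' : Fin n → Ω → ℝ := fun k => fun ω => g (X' k ω) with hZ'
  have hZ'meas : ∀ k, Measurable (Z' k) := fun k => hgm.comp (hX'meas k)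
  have hZ'ind : iIndepFun Z' ℙ := hX'ind.comp (fun _ => g) (fun _ => hgm)
  have hZ'ae : ∀ k, Z k =ᵐ[ℙ] Z' k := by
    intro k
    filter_upwards [hX'ae k] with ω hω
    rw [hZ k ω, hZ', hg]
    simp only [hω]
  have hZ'bdd : ∀ k ω, -m ≤ Z' k ω ∧ Z' k ω ≤ m := by
    intro k ω
    refine ⟨le_max_right _ _, max_le (min_le_right _ _) (by linarith)⟩
  have hvnonneg : ∀ k, 0 ≤ v k := by
    intro k
    have : 0 < m - |μk k| := by have := hmE k; simp only [hμk] at *; linarith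
    exact div_nonneg (variance_nonneg _ _) (by positivity)
  -- per k mgf bounds
  have hmgf1 : ∀ k, mgf (Z' k) ℙ (1/m) ≤ exp (μk k / m + v k) := by
    intro k
    have hkey := integral_exp_trunc_le (X k) (hXint k) (hX2 k) hm (hmE k)
      (hZ'meas k).aestronglyMeasurable (by
        filter_upwards [hX'ae k] with ω hω
        simp only [hZ', hg]
        rw [← hω])
    have heq : ∀ ω, exp ((1/m) * Z' k ω) = exp ((Z' k ω - μk k)/m) * exp (μk k / m) := by
      intro ω
      rw [← Real.exp_add]
      congr 1
      field_simp
      ring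
    rw [mgf]
    simp_rw [heq]
    rw [integral_mul_const]
    calc (∫ ω, exp ((Z' k ω - μk k)/m)) * exp (μk k / m)
        ≤ exp (v k) * exp (μk k / m) := by
          apply mul_le_mul_of_nonneg_right _ (exp_pos _).le
          exact hkey
      _ = exp (μk k / m + v k) := by rw [← Real.exp_add]; ring_nf
  have hmgf2 : ∀ k, mgf (fun ω => -Z' k ω) ℙ (1/m) ≤ exp (-μk k / m + v k) := by
    intro k
    have hXneg : Integrable (fun ω => -X k ω) := by exact (hXint k).neg
    have hX2neg : MemLp (fun ω => -X k ω) 2 ℙ := by exact (hX2 k).neg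
    have hintneg : (∫ ω, -X k ω) = -μk k := by rw [integral_neg]
    have hmEneg : |∫ ω, (fun ω => -X k ω) ω| < m := by
      simp only [hintneg, abs_neg]; exact hmE k
    have hvarneg : variance (fun ω => -X k ω) ℙ = variance (X k) ℙ := by
      have := variance_mul_const (-1 : ℝ) (X k) ℙ
      simp only [mul_neg, mul_one] at this
      simpa using this
    have hkey := integral_exp_trunc_le (fun ω => -X k ω) hXneg hX2neg hm hmEneg
      (Z := fun ω => -Z' k ω) ((hZ'meas k).neg).aestronglyMeasurable
      (by
        filter_upwards [hX'ae k] with ω hω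
        rw [trunc_neg hm.le]
        simp only [hZ', hg, hω])
    rw [hintneg, hvarneg] at hkey
    simp only [abs_neg] at hkey
    have heq : ∀ ω, exp ((1/m) * (-Z' k ω)) = exp ((-Z' k ω - -μk k)/m) * exp (-μk k / m) := by
      intro ω
      rw [← Real.exp_add]
      congr 1
      field_simp
      ring
    rw [mgf]
    simp_rw [heq]
    rw [integral_mul_const]
    calc (∫ ω, exp ((-Z' k ω - -μk k)/m)) * exp (-μk k / m)
        ≤ exp (v k) * exp (-μk k / m) := by
          apply mul_le_mul_of_nonneg_right _ (exp_pos _).le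
          convert hkey using 3
      _ = exp (-μk k / m + v k) := by rw [← Real.exp_add]; ring_nf
  -- independence of negated truncations
  set Z'' : Fin n → Ω → ℝ := fun k => fun ω => -Z' k ω with hZ''
  have hZ''meas : ∀ k, Measurable (Z'' k) := fun k => (hZ'meas k).neg
  have hZ''ind : iIndepFun Z'' ℙ :=
    hZ'ind.comp (fun _ => fun y => -y) (fun _ => measurable_neg)
  -- integrability of exp of sums
  have hsum_apply : ∀ ω, (∑ k, Z' k) ω = ∑ k, Z' k ω := by
    intro ω; simp [Finset.sum_apply]
  have hsum_apply'' : ∀ ω, (∑ k, Z'' k) ω = ∑ k, Z'' k ω := by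
    intro ω; simp [Finset.sum_apply]
  have hmpos : (0:ℝ) ≤ 1/m := by positivity
  have hTint : Integrable (fun ω => exp ((1/m) * (∑ k, Z' k) ω)) := by
    apply Integrable.mono' (integrable_const (exp ((1/m) * (n * m))))
    · apply Real.continuous_exp.comp_aestronglyMeasurable
      apply Measurable.aestronglyMeasurable
      apply Measurable.const_mul
      have hms : Measurable (fun ω => ∑ k, Z' k ω) :=
        Finset.measurable_sum Finset.univ (fun i _ => hZ'meas i)
      have : (∑ k, Z' k) = fun ω => ∑ k, Z' k ω := by
        funext ω; exact hsum_apply ω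
      rw [this]
      exact hms
    · filter_upwards with ω
      rw [Real.norm_eq_abs, abs_of_pos (exp_pos _), Real.exp_le_exp]
      apply mul_le_mul_of_nonneg_left _ hmpos
      rw [hsum_apply]
      calc ∑ k, Z' k ω ≤ ∑ _k : Fin n, m := Finset.sum_le_sum (fun k _ => (hZ'bdd k ω).2)
        _ = n * m := by simp [mul_comm]
  have hTint'' : Integrable (fun ω => exp ((1/m) * (∑ k, Z'' k) ω)) := by
    apply Integrable.mono' (integrable_const (exp ((1/m) * (n * m))))
    · apply Real.continuous_exp.comp_aestronglyMeasurable
      apply Measurable.aestronglyMeasurable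
      apply Measurable.const_mul
      have hms : Measurable (fun ω => ∑ k, Z'' k ω) :=
        Finset.measurable_sum Finset.univ (fun i _ => hZ''meas i)
      have : (∑ k, Z'' k) = fun ω => ∑ k, Z'' k ω := by
        funext ω; exact hsum_apply'' ω
      rw [this]
      exact hms
    · filter_upwards with ω
      rw [Real.norm_eq_abs, abs_of_pos (exp_pos _), Real.exp_le_exp]
      apply mul_le_mul_of_nonneg_left _ hmpos
      rw [hsum_apply'']
      calc ∑ k, Z'' k ω ≤ ∑ _k : Fin n, m :=
            Finset.sum_le_sum (fun k _ => by
              have := (hZ'bdd k ω).1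
              simp only [hZ'']
              linarith)
        _ = n * m := by simp [mul_comm]
  -- Chernoff, upper tail
  set e : ℝ := exp ((∑ k, v k) - t / m) with he
  have tail1 : (ℙ {ω | Sμ + t ≤ (∑ k, Z' k) ω}).toReal ≤ e := by
    have h1 := measure_ge_le_exp_mul_mgf (μ := ℙ) (X := ∑ k, Z' k) (Sμ + t) hmpos hTint
    have hprod : mgf (∑ k, Z' k) ℙ (1/m) ≤ exp (Sμ/m + ∑ k, v k) := by
      rw [hZ'ind.mgf_sum hZ'meas Finset.univ]
      calc ∏ k, mgf (Z' k) ℙ (1/m) ≤ ∏ k, exp (μk k / m + v k) :=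
            Finset.prod_le_prod (fun k _ => mgf_nonneg) (fun k _ => hmgf1 k)
        _ = exp (∑ k, (μk k / m + v k)) := by rw [Real.exp_sum]
        _ = exp (Sμ/m + ∑ k, v k) := by
            congr 1
            rw [Finset.sum_add_distrib, ← Finset.sum_div]
    calc (ℙ {ω | Sμ + t ≤ (∑ k, Z' k) ω}).toReal
        ≤ exp (-(1/m) * (Sμ + t)) * mgf (∑ k, Z' k) ℙ (1/m) := h1
      _ ≤ exp (-(1/m) * (Sμ + t)) * exp (Sμ/m + ∑ k, v k) :=
          mul_le_mul_of_nonneg_left hprod (exp_pos _).le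
      _ = e := by
          rw [← Real.exp_add, he]
          congr 1
          field_simp
          ring
  -- Chernoff, lower tail
  have tail2 : (ℙ {ω | t - Sμ ≤ (∑ k, Z'' k) ω}).toReal ≤ e := by
    have h1 := measure_ge_le_exp_mul_mgf (μ := ℙ) (X := ∑ k, Z'' k) (t - Sμ) hmpos hTint''
    have hprod : mgf (∑ k, Z'' k) ℙ (1/m) ≤ exp (-Sμ/m + ∑ k, v k) := by
      rw [hZ''ind.mgf_sum hZ''meas Finset.univ]
      calc ∏ k, mgf (Z'' k) ℙ (1/m) ≤ ∏ k, exp (-μk k / m + v k) :=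
            Finset.prod_le_prod (fun k _ => mgf_nonneg) (fun k _ => hmgf2 k)
        _ = exp (∑ k, (-μk k / m + v k)) := by rw [Real.exp_sum]
        _ = exp (-Sμ/m + ∑ k, v k) := by
            congr 1
            rw [Finset.sum_add_distrib, ← Finset.sum_div, ← Finset.sum_neg_distrib]
    calc (ℙ {ω | t - Sμ ≤ (∑ k, Z'' k) ω}).toReal
        ≤ exp (-(1/m) * (t - Sμ)) * mgf (∑ k, Z'' k) ℙ (1/m) := h1
      _ ≤ exp (-(1/m) * (t - Sμ)) * exp (-Sμ/m + ∑ k, v k) :=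
          mul_le_mul_of_nonneg_left hprod (exp_pos _).le
      _ = e := by
          rw [← Real.exp_add, he]
          congr 1
          field_simp
          ring
  -- event inclusion
  have hincl : ℙ {ω | z ≤ |(∑ k, Y k ω) - ∑ k, ∫ ω', X k ω'|} ≤
      ℙ ({ω | Sμ + t ≤ (∑ k, Z' k) ω} ∪ {ω | t - Sμ ≤ (∑ k, Z'' k) ω}) := by
    apply measure_mono_ae
    have hYall : ∀ᵐ ω ∂ℙ, ∀ k, |Y k ω - Z k ω| ≤ b := ae_all_iff.2 hY
    have hZall : ∀ᵐ ω ∂ℙ, ∀ k, Z k ω = Z' k ω := ae_all_iff.2 hZ'ae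
    filter_upwards [hYall, hZall] with ω hYω hZω hmem
    have hdiff : |(∑ k, Y k ω) - ∑ k, Z' k ω| ≤ b * n := by
      have h1 : (∑ k, Y k ω) - ∑ k, Z' k ω = ∑ k, (Y k ω - Z' k ω) := by
        rw [Finset.sum_sub_distrib]
      rw [h1]
      calc |∑ k, (Y k ω - Z' k ω)| ≤ ∑ k, |Y k ω - Z' k ω| :=
            Finset.abs_sum_le_sum_abs _ _
        _ ≤ ∑ _k : Fin n, b := Finset.sum_le_sum (fun k _ => by rw [← hZω k]; exact hYω k)
        _ = b * n := by simp [mul_comm]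
    have hSsum : Sμ = ∑ k, ∫ ω', X k ω' := rfl
    have htail : t ≤ |(∑ k, Z' k ω) - Sμ| := by
      have h2 : |(∑ k, Y k ω) - Sμ| ≤ |(∑ k, Y k ω) - ∑ k, Z' k ω| + |(∑ k, Z' k ω) - Sμ| := by
        have := abs_sub_abs_le_abs_sub ((∑ k, Y k ω) - Sμ) ((∑ k, Y k ω) - ∑ k, Z' k ω)
        calc |(∑ k, Y k ω) - Sμ| = |((∑ k, Y k ω) - ∑ k, Z' k ω) + ((∑ k, Z' k ω) - Sμ)| := by
              ring_nf
          _ ≤ _ := abs_add_le _ _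
      have hz2 : z ≤ |(∑ k, Y k ω) - Sμ| := by
        rw [hSsum]; exact hmem
      linarith [hdiff, h2, hz2]
    rcases le_abs.1 htail with h | h
    · left
      simp only [Set.mem_setOf_eq, hsum_apply]
      linarith
    · right
      simp only [Set.mem_setOf_eq]; rw [hsum_apply'']; simp only [hZ'']
      rw [Finset.sum_neg_distrib]
      linarith
  -- put everything together
  have hfinal : ℙ ({ω | Sμ + t ≤ (∑ k, Z' k) ω} ∪ {ω | t - Sμ ≤ (∑ k, Z'' k) ω}) ≤
      ENNReal.ofReal (2 * e) := by
    calc ℙ ({ω | Sμ + t ≤ (∑ k, Z' k) ω} ∪ {ω | t - Sμ ≤ (∑ k, Z'' k) ω})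
        ≤ ℙ {ω | Sμ + t ≤ (∑ k, Z' k) ω} + ℙ {ω | t - Sμ ≤ (∑ k, Z'' k) ω} :=
          measure_union_le _ _
      _ ≤ ENNReal.ofReal e + ENNReal.ofReal e := by
          gcongr
          · rw [← ENNReal.ofReal_toReal (measure_ne_top ℙ {ω | Sμ + t ≤ (∑ k, Z' k) ω})]
            exact ENNReal.ofReal_le_ofReal tail1
          · rw [← ENNReal.ofReal_toReal (measure_ne_top ℙ {ω | t - Sμ ≤ (∑ k, Z'' k) ω})]
            exact ENNReal.ofReal_le_ofReal tail2
      _ = ENNReal.ofReal (2 * e) := by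
          rw [← ENNReal.ofReal_add (exp_pos _).le (exp_pos _).le]
          congr 1
          ring
  refine hincl.trans (hfinal.trans_eq ?_)
  congr 2
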